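/- With the multiplicative filtering iteration U_i^{(r+1)} = W_i^{(r)} ∘ ∏_j (W_j^{(r)})^{ρ_{ij}}, W_i^{(r+1)} = U_i^{(r+1)}/‖U_i^{(r+1)}‖_1 started at a positive matrix A with rows in the probability simplex and P = (ρ_{ij}) symmetric stochastic, each sequence {W_i^{(r)}}_r converges in R^K as r → ∞. -/

import Mathlib

open Matrix

open Filter

/-- Trichotomy for "Dirichlet polynomials" with distinct nonneg bases indexed by a finset of ℝ. -/
lemma dirichlet_tri (s : Finset ℝ) (C : ℝ → ℝ) (hs : ∀ x ∈ s, 0 ≤ x) :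
    (∃ l, Tendsto (fun r : ℕ => ∑ x ∈ s, C x * x ^ r) atTop (nhds l)) ∨
    Tendsto (fun r : ℕ => ∑ x ∈ s, C x * x ^ r) atTop atTop ∨
    Tendsto (fun r : ℕ => ∑ x ∈ s, C x * x ^ r) atTop atBot := by
  by_cases hbig : ∃ x ∈ s, C x ≠ 0 ∧ 1 < x
  · -- dominant eigenvalue
    set t := s.filter (fun x => C x ≠ 0 ∧ 1 < x) with ht
    have htne : t.Nonempty := by
      obtain ⟨x, hx, h1, h2⟩ := hbig
      exact ⟨x, by simp [ht, hx, h1, h2]⟩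
    set Λ := t.max' htne with hΛ
    have hΛt : Λ ∈ t := t.max'_mem htne
    have hΛs : Λ ∈ s := (Finset.mem_filter.mp hΛt).1
    have hΛ1 : 1 < Λ := (Finset.mem_filter.mp hΛt).2.2
    have hΛC : C Λ ≠ 0 := (Finset.mem_filter.mp hΛt).2.1
    have hΛ0 : 0 < Λ := lt_trans one_pos hΛ1
    have hg : Tendsto (fun r : ℕ => ∑ x ∈ s, C x * (x / Λ) ^ r) atTop
        (nhds (∑ x ∈ s, if x = Λ then C x else 0)) := by
      apply tendsto_finset_sum
      intro x hx
      by_cases hxΛ : x = Λ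
      · simp only [hxΛ, div_self (ne_of_gt hΛ0), one_pow, if_true]
        simpa using tendsto_const_nhds (x := C Λ)
      · simp only [hxΛ, if_false]
        by_cases hCx : C x = 0
        · simpa [hCx] using tendsto_const_nhds (x := (0:ℝ))
        · have hratio : |x / Λ| < 1 := by
            rw [abs_div, abs_of_nonneg (hs x hx), abs_of_pos hΛ0, div_lt_one hΛ0]
            rcases le_or_gt x 1 with h1 | h1
            · exact lt_of_le_of_lt h1 hΛ1
            · have : x ∈ t := Finset.mem_filter.mpr ⟨hx, hCx, h1⟩
              exact lt_of_le_of_ne (t.le_max' x this) hxΛ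
          have := tendsto_pow_atTop_nhds_zero_of_abs_lt_one hratio
          simpa using (this.const_mul (C x))
    have hsum : (∑ x ∈ s, if x = Λ then C x else 0) = C Λ := by
      rw [Finset.sum_ite_eq' s Λ C]
      simp [hΛs]
    rw [hsum] at hg
    have hpow : Tendsto (fun r : ℕ => Λ ^ r) atTop atTop :=
      tendsto_pow_atTop_atTop_of_one_lt hΛ1
    have heq : ∀ r : ℕ, (∑ x ∈ s, C x * x ^ r) = (∑ x ∈ s, C x * (x / Λ) ^ r) * Λ ^ r := by
      intro r
      rw [Finset.sum_mul]
      apply Finset.sum_congr rfl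
      intro x hx
      rw [mul_assoc, div_pow, div_mul_cancel₀]
      exact pow_ne_zero _ (ne_of_gt hΛ0)
    rcases lt_or_gt_of_ne hΛC with hneg | hpos
    · right; right
      simpa only [← heq] using hg.neg_mul_atTop hneg hpow
    · right; left
      simpa only [← heq] using hg.pos_mul_atTop hpos hpow
  · -- all contributing bases ≤ 1
    push_neg at hbig
    left
    refine ⟨∑ x ∈ s.filter (fun x => x = 1), C x, ?_⟩
    have : Tendsto (fun r : ℕ => ∑ x ∈ s, C x * x ^ r) atTop
        (nhds (∑ x ∈ s, if x = 1 then C x else 0)) := by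
      apply tendsto_finset_sum
      intro x hx
      by_cases hx1 : x = 1
      · simp only [hx1, one_pow, mul_one, if_true]
        exact tendsto_const_nhds
      · simp only [hx1, if_false]
        by_cases hCx : C x = 0
        · simpa [hCx] using tendsto_const_nhds (x := (0:ℝ))
        · have hxlt : x < 1 := lt_of_le_of_ne (hbig x hx hCx) hx1
          have hratio : |x| < 1 := by rwa [abs_of_nonneg (hs x hx)]
          simpa using ((tendsto_pow_atTop_nhds_zero_of_abs_lt_one hratio).const_mul (C x))
    rwa [← Finset.sum_filter] at this

open Matrix in
lemma tri {m : ℕ} (c μ : Fin m → ℝ) (hμ : ∀ t, 0 ≤ μ t) :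
    (∃ l, Tendsto (fun r : ℕ => ∑ t, c t * μ t ^ r) atTop (nhds l)) ∨
    Tendsto (fun r : ℕ => ∑ t, c t * μ t ^ r) atTop atTop ∨
    Tendsto (fun r : ℕ => ∑ t, c t * μ t ^ r) atTop atBot := by
  have key : ∀ r : ℕ, (∑ t, c t * μ t ^ r) =
      ∑ x ∈ Finset.image μ Finset.univ, (∑ t ∈ Finset.univ.filter (fun t => μ t = x), c t) * x ^ r := by
    intro r
    rw [← Finset.sum_fiberwise_of_maps_to (fun t _ => Finset.mem_image_of_mem μ (Finset.mem_univ t))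
      (fun t => c t * μ t ^ r)]
    apply Finset.sum_congr rfl
    intro x _
    rw [Finset.sum_mul]
    apply Finset.sum_congr rfl
    intro t ht
    rw [(Finset.mem_filter.mp ht).2]
  have hs : ∀ x ∈ Finset.image μ Finset.univ, (0:ℝ) ≤ x := by
    intro x hx
    obtain ⟨t, _, rfl⟩ := Finset.mem_image.mp hx
    exact hμ t
  have := dirichlet_tri (Finset.image μ Finset.univ)
    (fun x => ∑ t ∈ Finset.univ.filter (fun t => μ t = x), c t) hs
  simpa only [← key] using this

open Matrix in
/-- Spectral form for powers of a PSD symmetric real matrix applied to a vector. -/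
lemma spectral_form {m : ℕ} (M : Matrix (Fin m) (Fin m) ℝ) (hM : M.PosSemidef)
    (v : Fin m → ℝ) (i : Fin m) :
    ∃ c μ : Fin m → ℝ, (∀ t, 0 ≤ μ t) ∧
      ∀ r : ℕ, ((M ^ r) *ᵥ v) i = ∑ t, c t * μ t ^ r := by
  have hH : M.IsHermitian := hM.1
  set U : Matrix (Fin m) (Fin m) ℝ := (hH.eigenvectorUnitary : Matrix (Fin m) (Fin m) ℝ) with hU
  have hpow : ∀ r : ℕ, M ^ r = U * diagonal (fun t => hH.eigenvalues t ^ r) * star U := by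
    intro r
    induction r with
    | zero =>
      have h1 : (fun t : Fin m => hH.eigenvalues t ^ 0) = fun _ => (1:ℝ) := by
        funext t; rw [pow_zero]
      rw [pow_zero, h1, diagonal_one, mul_one]
      exact ((Matrix.mem_unitaryGroup_iff).mp hH.eigenvectorUnitary.2).symm
    | succ r ih =>
      have hspec : M = U * diagonal (fun t => hH.eigenvalues t) * star U := by
        have := hH.spectral_theorem
        simpa [hU, Function.comp] using this
      calc M ^ (r+1) = M ^ r * M := pow_succ M r
        _ = (U * diagonal (fun t => hH.eigenvalues t ^ r) * star U) *
            (U * diagonal (fun t => hH.eigenvalues t) * star U) := by rw [ih, ← hspec]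
        _ = U * (diagonal (fun t => hH.eigenvalues t ^ r) * ((star U * U) *
            diagonal (fun t => hH.eigenvalues t))) * star U := by
            simp only [Matrix.mul_assoc]
        _ = U * diagonal (fun t => hH.eigenvalues t ^ (r+1)) * star U := by
            rw [(Matrix.mem_unitaryGroup_iff').mp hH.eigenvectorUnitary.2, one_mul,
              diagonal_mul_diagonal]
            have h2 : (fun i => hH.eigenvalues i ^ r * hH.eigenvalues i)
                = fun t => hH.eigenvalues t ^ (r+1) := by
              funext t; rw [← pow_succ]
            rw [h2]
  refine ⟨fun t => U i t * ((star U) *ᵥ v) t, fun t => hH.eigenvalues t,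
    fun t => hM.eigenvalues_nonneg t, fun r => ?_⟩
  rw [hpow r, ← Matrix.mulVec_mulVec, ← Matrix.mulVec_mulVec]
  show ∑ t, U i t * ((diagonal (fun t => hH.eigenvalues t ^ r)) *ᵥ ((star U) *ᵥ v)) t = _
  apply Finset.sum_congr rfl
  intro t _
  rw [Matrix.mulVec_diagonal]
  ring

open Matrix in
lemma onePlusP_psd {m : ℕ} (P : Matrix (Fin m) (Fin m) ℝ) (hsym : P.IsSymm)
    (hnonneg : ∀ i j, 0 ≤ P i j) (hrow : ∀ i, ∑ j, P i j = 1) :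
    (1 + P).PosSemidef := by
  rw [Matrix.posSemidef_iff_dotProduct_mulVec]
  constructor
  · show (1 + P)ᴴ = 1 + P
    ext i j
    simp only [Matrix.conjTranspose_apply, Matrix.add_apply, star_add, Matrix.one_apply,
      star_trivial]
    rw [hsym.apply]
    by_cases h : i = j <;> simp [h, eq_comm]
  · intro x
    have hx : star x = x := by simp
    rw [hx]
    have expand : dotProduct x ((1 + P) *ᵥ x) = (∑ i, x i ^ 2) + ∑ i, ∑ j, P i j * x i * x j := by
      rw [Matrix.add_mulVec, Matrix.one_mulVec, dotProduct_add]
      congr 1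
      · simp [dotProduct, pow_two]
      · simp only [dotProduct, Matrix.mulVec, dotProduct, Finset.mul_sum]
        apply Finset.sum_congr rfl; intro i _
        apply Finset.sum_congr rfl; intro j _; ring
    rw [expand]
    -- key inequality: ∑ i j, P i j * x i * x j ≥ - ∑ i, x i ^2
    have key : (0:ℝ) ≤ ∑ i, ∑ j, P i j * (x i + x j)^2 / 2 := by
      apply Finset.sum_nonneg; intro i _
      apply Finset.sum_nonneg; intro j _
      have := hnonneg i j
      positivity
    have expand2 : ∑ i, ∑ j, P i j * (x i + x j)^2 / 2
        = (∑ i, x i ^ 2) + ∑ i, ∑ j, P i j * x i * x j := by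
      have h1 : ∀ i j, P i j * (x i + x j)^2 / 2
          = P i j * x i ^ 2 / 2 + P i j * x j ^ 2 / 2 + P i j * x i * x j := by
        intro i j; ring
      simp only [h1, Finset.sum_add_distrib]
      congr 1
      · -- ∑i∑j P ij xi²/2 + ∑i∑j P ij xj²/2 = ∑ xi²
        have ha : ∀ i, ∑ j, P i j * x i ^ 2 / 2 = x i ^ 2 / 2 := by
          intro i
          rw [← Finset.sum_div, ← Finset.sum_mul, hrow, one_mul]
        have hcol : ∀ j, ∑ i, P i j * x j ^ 2 / 2 = x j ^ 2 / 2 := by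
          intro j
          have hc : ∑ i, P i j = 1 := by
            have : ∀ i, P i j = P j i := fun i => by
              conv_lhs => rw [← hsym]
              rfl
            rw [Finset.sum_congr rfl (fun i _ => this i), hrow]
          rw [← Finset.sum_div, ← Finset.sum_mul, hc, one_mul]
        rw [Finset.sum_congr rfl (fun i _ => ha i), Finset.sum_comm,
          Finset.sum_congr rfl (fun j (_ : j ∈ Finset.univ) => hcol j)]
        rw [← Finset.sum_add_distrib]
        apply Finset.sum_congr rfl; intro i _; ring
    rw [← expand2]
    exact key

lemma sum_tendsto_or {ι : Type*} (s : Finset ι) (f : ι → ℕ → ℝ)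
    (hpos : ∀ x ∈ s, ∀ r, 0 ≤ f x r)
    (h : ∀ x ∈ s, (∃ l, Tendsto (fun r => f x r) atTop (nhds l)) ∨
        Tendsto (fun r => f x r) atTop atTop) :
    (∃ l, Tendsto (fun r => ∑ x ∈ s, f x r) atTop (nhds l)) ∨
    Tendsto (fun r => ∑ x ∈ s, f x r) atTop atTop := by
  classical
  induction s using Finset.induction with
  | empty => exact Or.inl ⟨0, by simp⟩
  | @insert a s ha ih =>
    have hsum : ∀ r, ∑ x ∈ insert a s, f x r = f a r + ∑ x ∈ s, f x r := by
      intro r; rw [Finset.sum_insert ha]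
    simp only [hsum]
    have hrestpos : ∀ r, 0 ≤ ∑ x ∈ s, f x r := fun r =>
      Finset.sum_nonneg (fun x hx => hpos x (Finset.mem_insert_of_mem hx) r)
    rcases h a (Finset.mem_insert_self a s) with ⟨l1, h1⟩ | h1
    · rcases ih (fun x hx => hpos x (Finset.mem_insert_of_mem hx))
        (fun x hx => h x (Finset.mem_insert_of_mem hx)) with ⟨l2, h2⟩ | h2
      · exact Or.inl ⟨l1 + l2, h1.add h2⟩
      · exact Or.inr (Tendsto.nonneg_add_atTop
          (fun r => hpos a (Finset.mem_insert_self a s) r) h2)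
    · exact Or.inr (Tendsto.atTop_add_nonneg h1 hrestpos)

set_option maxHeartbeats 1000000 in
/-- The multiplicative filtering iterates (ε = 0) converge: for every `i`, the
sequence of rows `W_i^{(r)}` converges in `ℝ^K` as `r → ∞`. -/
theorem stmt_5 {n K : ℕ} (A : Matrix (Fin n) (Fin K) ℝ)
    (hApos : ∀ i k, 0 < A i k) (hArow : ∀ i, ∑ k, A i k = 1)
    (P : Matrix (Fin n) (Fin n) ℝ) (hsym : P.IsSymm)
    (hnonneg : ∀ i j, 0 ≤ P i j) (hrowP : ∀ i, ∑ j, P i j = 1)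
    (W : ℕ → Matrix (Fin n) (Fin K) ℝ)
    (hW0 : W 0 = A)
    (hWiter : ∀ r i k,
      W (r + 1) i k =
        (W r i k * ∏ j, (W r j k) ^ (P i j)) /
          (∑ k', W r i k' * ∏ j, (W r j k') ^ (P i j))) :
    ∀ i, ∃ L : Fin K → ℝ,
      Filter.Tendsto (fun r => W r i) Filter.atTop (nhds L) := by
  classical
  intro i
  set L : Matrix (Fin n) (Fin K) ℝ := Matrix.of (fun i k => Real.log (A i k)) with hL
  set M : Matrix (Fin n) (Fin n) ℝ := 1 + P with hM
  set Y : ℕ → Matrix (Fin n) (Fin K) ℝ := fun r => M ^ r * L with hYdef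
  have hYrec : ∀ r j k, Y (r + 1) j k = Y r j k + ∑ jj, P j jj * Y r jj k := by
    intro r j k
    have h1 : Y (r + 1) = M * Y r := by
      show M ^ (r+1) * L = M * (M ^ r * L)
      rw [pow_succ', Matrix.mul_assoc]
    rw [h1, hM]
    simp only [Matrix.mul_apply, Matrix.add_apply, Matrix.one_apply, add_mul, ite_mul, one_mul,
      zero_mul, Finset.sum_add_distrib, Finset.sum_ite_eq, Finset.mem_univ, if_true]
  -- closed form
  have closed : ∀ r j k, W r j k = Real.exp (Y r j k) / ∑ k', Real.exp (Y r j k') := by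
    intro r
    induction r with
    | zero =>
      intro j k
      have hY00 : Y 0 = L := by rw [hYdef]; simp
      have hY0 : ∀ j k, Y 0 j k = Real.log (A j k) := by
        intro j k
        rw [hY00, hL]
        rfl
      have h1 : ∑ k', Real.exp (Y 0 j k') = 1 := by
        rw [Finset.sum_congr rfl (fun k' _ => by rw [hY0, Real.exp_log (hApos j k')])]
        exact hArow j
      rw [hW0, h1, hY0, Real.exp_log (hApos j k), div_one]
    | succ r ih =>
      intro j k
      have hZpos : ∀ a, 0 < ∑ b, Real.exp (Y r a b) :=
        fun a => Finset.sum_pos (fun b _ => Real.exp_pos _) ⟨k, Finset.mem_univ k⟩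
      have hQpos : 0 < ∏ jj, (∑ b, Real.exp (Y r jj b)) ^ (P j jj) :=
        Finset.prod_pos (fun jj _ => Real.rpow_pos_of_pos (hZpos jj) _)
      have hnum : ∀ b : Fin K, W r j b * ∏ jj, (W r jj b) ^ (P j jj)
          = Real.exp (Y (r+1) j b) *
            ((∑ b', Real.exp (Y r j b')) * ∏ jj, (∑ b', Real.exp (Y r jj b')) ^ (P j jj))⁻¹ := by
        intro b
        have hprod : ∏ jj, (W r jj b) ^ (P j jj)
            = Real.exp (∑ jj, P j jj * Y r jj b) /
              ∏ jj, (∑ b', Real.exp (Y r jj b')) ^ (P j jj) := by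
          have h1 : ∀ jj, (W r jj b) ^ (P j jj)
              = Real.exp (P j jj * Y r jj b) / (∑ b', Real.exp (Y r jj b')) ^ (P j jj) := by
            intro jj
            rw [ih jj b, Real.div_rpow (Real.exp_pos _).le (hZpos jj).le]
            congr 1
            rw [Real.rpow_def_of_pos (Real.exp_pos _), Real.log_exp, mul_comm]
          rw [Finset.prod_congr rfl (fun jj _ => h1 jj), Finset.prod_div_distrib, ← Real.exp_sum]
        rw [ih j b, hprod, hYrec r j b, Real.exp_add]
        have e1 : (0:ℝ) < ∑ b', Real.exp (Y r j b') := hZpos j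
        field_simp
      rw [hWiter r j k, hnum k, Finset.sum_congr rfl (fun b _ => hnum b), ← Finset.sum_mul]
      have hden : ((∑ b', Real.exp (Y r j b')) *
          ∏ jj, (∑ b', Real.exp (Y r jj b')) ^ (P j jj))⁻¹ ≠ 0 :=
        inv_ne_zero (mul_pos (hZpos j) hQpos).ne'
      rw [mul_div_mul_right _ _ hden]
  -- spectral / convergence part
  have hpsd : M.PosSemidef := onePlusP_psd P hsym hnonneg hrowP
  have hdiff : ∀ (k k' : Fin K) (r : ℕ),
      Y r i k' - Y r i k = ((M ^ r) *ᵥ (fun j => L j k' - L j k)) i := by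
    intro k k' r
    show (M ^ r * L) i k' - (M ^ r * L) i k = _
    simp only [Matrix.mul_apply, Matrix.mulVec, dotProduct, mul_sub, Finset.sum_sub_distrib]
  have hterm : ∀ k k' : Fin K,
      (∃ l : ℝ, Tendsto (fun r => Real.exp (Y r i k' - Y r i k)) atTop (nhds l)) ∨
      Tendsto (fun r => Real.exp (Y r i k' - Y r i k)) atTop atTop := by
    intro k k'
    obtain ⟨c, μ, hμ, hcf⟩ := spectral_form M hpsd (fun j => L j k' - L j k) i
    have hfun : (fun r : ℕ => Y r i k' - Y r i k) = fun r => ∑ t, c t * μ t ^ r := by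
      funext r; rw [hdiff k k' r, hcf r]
    rcases tri c μ hμ with ⟨l, hl⟩ | h | h
    · exact Or.inl ⟨Real.exp l, (Real.continuous_exp.tendsto l).comp (hfun ▸ hl)⟩
    · exact Or.inr (Real.tendsto_exp_atTop.comp (hfun ▸ h))
    · exact Or.inl ⟨0, Real.tendsto_exp_atBot.comp (hfun ▸ h)⟩
  -- per k convergence of W r i k
  have hWk : ∀ k : Fin K, ∃ l : ℝ, Tendsto (fun r => W r i k) atTop (nhds l) := by
    intro k
    have hS : ∀ r, W r i k = (∑ k', Real.exp (Y r i k' - Y r i k))⁻¹ := by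
      intro r
      rw [closed r i k]
      have : ∑ k', Real.exp (Y r i k' - Y r i k)
          = (∑ k', Real.exp (Y r i k')) / Real.exp (Y r i k) := by
        rw [Finset.sum_div]
        exact Finset.sum_congr rfl (fun k' _ => Real.exp_sub _ _)
      rw [this, ← one_div, one_div_div]
    simp only [hS]
    have hone : ∀ r, (1:ℝ) ≤ ∑ k', Real.exp (Y r i k' - Y r i k) := by
      intro r
      calc (1:ℝ) = Real.exp (Y r i k - Y r i k) := by rw [sub_self, Real.exp_zero]
        _ ≤ ∑ k', Real.exp (Y r i k' - Y r i k) :=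
          Finset.single_le_sum (f := fun k' => Real.exp (Y r i k' - Y r i k))
            (fun k' _ => (Real.exp_pos _).le) (Finset.mem_univ k)
    rcases sum_tendsto_or Finset.univ (fun k' r => Real.exp (Y r i k' - Y r i k))
        (fun k' _ r => (Real.exp_pos _).le) (fun k' _ => hterm k k') with ⟨l, hl⟩ | h
    · have hl1 : (1:ℝ) ≤ l := ge_of_tendsto' hl hone
      exact ⟨l⁻¹, hl.inv₀ (by linarith)⟩
    · exact ⟨0, h.inv_tendsto_atTop⟩
  choose Lf hLf using hWk
  exact ⟨Lf, tendsto_pi_nhds.mpr hLf⟩
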